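/- arXiv:2604.03412 — 5 statements merged into one kernel-verified Lean document; each statement's English description precedes it below -/
import Mathlib

section
/- For any finite set P, any function f : P → [0,1], and any positive integer i ≤ |P|, the average over all i-element subsets P' of P of the product ∏_{p ∈ P'} (1 - f(p)) is at most (1 - (∑_{p ∈ P} f(p))/|P|)^i. -/
open Finset

private lemma amgm_aux (μ c A : ℝ) (hμ : 0 ≤ μ) (hc : 0 ≤ c) (j : ℕ)
    (h : (j : ℝ) * μ + c = (j + 1) * A) : μ ^ j * c ≤ A ^ (j + 1) := by
  have hA : 0 ≤ A := by
    have h1 : (0:ℝ) ≤ (j : ℝ) * μ + c := by positivity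
    nlinarith [Nat.cast_nonneg (α := ℝ) j]
  rcases eq_or_lt_of_le hμ with hμ0 | hμpos
  · -- μ = 0
    rcases Nat.eq_zero_or_pos j with hj | hj
    · subst hj
      simp only [pow_zero, one_mul, Nat.cast_zero, zero_mul, zero_add, pow_one] at *
      linarith
    · have : μ ^ j = 0 := by
        rw [← hμ0]
        exact zero_pow (by omega)
      rw [this, zero_mul]
      positivity
  · -- μ > 0
    have hb := one_add_mul_le_pow (a := A / μ - 1)
      (by
        have : 0 ≤ A / μ := div_nonneg hA hμpos.le
        linarith) (j + 1)
    rw [show (1 + (A / μ - 1)) = A / μ by ring] at hb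
    have h2 : (1 + (↑(j + 1) : ℝ) * (A / μ - 1)) * μ ^ (j + 1) ≤ (A / μ) ^ (j + 1) * μ ^ (j + 1) :=
      mul_le_mul_of_nonneg_right hb (by positivity)
    have hμne : μ ≠ 0 := ne_of_gt hμpos
    rw [div_pow, div_mul_cancel₀ _ (by positivity)] at h2
    have e : μ ^ (j + 1) = μ ^ j * μ := pow_succ μ j
    have e2 : (A / μ) * μ ^ (j + 1) = A * μ ^ j := by
      rw [e]; field_simp
    have hcc : c = ((j : ℝ) + 1) * A - (j : ℝ) * μ := by push_cast; linarith
    push_cast at h2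
    have expand : (1 + ((j : ℝ) + 1) * (A / μ - 1)) * μ ^ (j + 1)
        = μ ^ (j + 1) + ((j : ℝ) + 1) * (A * μ ^ j) - ((j : ℝ) + 1) * μ ^ (j + 1) := by
      rw [← e2]; ring
    have lhs_eq : μ ^ j * c
        = μ ^ (j + 1) + ((j : ℝ) + 1) * (A * μ ^ j) - ((j : ℝ) + 1) * μ ^ (j + 1) := by
      rw [hcc, e]; ring
    linarith [h2, expand, lhs_eq]

private lemma key_maclaurin {α : Type*} [DecidableEq α] (x : α → ℝ) :
    ∀ P : Finset α, (∀ p ∈ P, 0 ≤ x p) → ∀ i : ℕ,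
      ∑ P' ∈ P.powersetCard i, ∏ p ∈ P', x p
        ≤ (P.card.choose i : ℝ) * ((∑ p ∈ P, x p) / P.card) ^ i := by
  intro P
  induction P using Finset.cons_induction with
  | empty =>
    intro _ i
    cases i with
    | zero => simp
    | succ j =>
      rw [Finset.powersetCard_eq_empty.2 (by simp)]
      simp
  | cons a s ha IH =>
    intro hx i
    have hxs : ∀ p ∈ s, 0 ≤ x p := fun p hp => hx p (Finset.mem_cons_of_mem hp)
    have hta : 0 ≤ x a := hx a (Finset.mem_cons_self a s)
    cases i with
    | zero => simp
    | succ j =>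
      set m := s.card with hm
      set S' : ℝ := ∑ p ∈ s, x p with hS'
      set t : ℝ := x a with ht
      have hS'0 : 0 ≤ S' := Finset.sum_nonneg hxs
      set μ : ℝ := S' / m with hμdef
      have hμ0 : 0 ≤ μ := div_nonneg hS'0 (Nat.cast_nonneg m)
      -- split the sum
      have hcons : (Finset.cons a s ha : Finset α) = insert a s := by
        rw [Finset.cons_eq_insert]
      have hsplit : ∑ P' ∈ (Finset.cons a s ha).powersetCard (j + 1), ∏ p ∈ P', x p
          = (∑ P' ∈ s.powersetCard (j + 1), ∏ p ∈ P', x p)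
            + t * ∑ P' ∈ s.powersetCard j, ∏ p ∈ P', x p := by
        rw [hcons, Finset.powersetCard_succ_insert ha, Finset.sum_union, Finset.sum_image]
        · congr 1
          rw [Finset.mul_sum]
          apply Finset.sum_congr rfl
          intro P' hP'
          have hsub : P' ⊆ s := (Finset.mem_powersetCard.1 hP').1
          rw [Finset.prod_insert (fun hmem => ha (hsub hmem))]
        · intro u hu v hv huv
          have hus : u ⊆ s := (Finset.mem_powersetCard.1 hu).1
          have hvs : v ⊆ s := (Finset.mem_powersetCard.1 hv).1
          have hau : a ∉ u := fun hmem => ha (hus hmem)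
          have hav : a ∉ v := fun hmem => ha (hvs hmem)
          have h1 : u = (insert a u).erase a := by rw [Finset.erase_insert hau]
          rw [h1, huv, Finset.erase_insert hav]
        · rw [Finset.disjoint_left]
          intro u hu hu2
          have hus : u ⊆ s := (Finset.mem_powersetCard.1 hu).1
          obtain ⟨v, hv, rfl⟩ := Finset.mem_image.1 hu2
          exact ha (hus (Finset.mem_insert_self a v))
      have IH1 := IH hxs (j + 1)
      have IH2 := IH hxs j
      have hbound : ∑ P' ∈ (Finset.cons a s ha).powersetCard (j + 1), ∏ p ∈ P', x p
          ≤ (m.choose (j + 1) : ℝ) * μ ^ (j + 1) + t * ((m.choose j : ℝ) * μ ^ j) := by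
        rw [hsplit]
        exact add_le_add IH1 (mul_le_mul_of_nonneg_left IH2 hta)
      rw [Finset.card_cons, Finset.sum_cons]
      by_cases hjm : j ≤ m
      · -- main case
        set A : ℝ := (t + S') / (m + 1) with hA
        set c : ℝ := (((m : ℝ) - j) * μ + (j + 1) * t) / (m + 1) with hcdef
        have hmμ : (m : ℝ) * μ = S' := by
          rcases Nat.eq_zero_or_pos m with hm0 | hmpos
          · have : s = ∅ := Finset.card_eq_zero.1 hm0
            subst this
            simp [hS', hμdef]
          · rw [hμdef]
            field_simp
        have hc0 : 0 ≤ c := by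
          have : (0:ℝ) ≤ (m : ℝ) - j := by
            have := hjm
            push_cast
            exact sub_nonneg.2 (by exact_mod_cast hjm)
          rw [hcdef]
          positivity
        have hm1 : (m : ℝ) + 1 ≠ 0 := by positivity
        have hcmul : c * ((m : ℝ) + 1) = ((m : ℝ) - j) * μ + ((j : ℝ) + 1) * t := by
          rw [hcdef]; field_simp
        have hAmul : A * ((m : ℝ) + 1) = t + S' := by
          rw [hA]; field_simp
        have hrel : (j : ℝ) * μ + c = ((j : ℝ) + 1) * A := by
          apply mul_left_cancel₀ hm1
          linear_combination hcmul - ((j : ℝ) + 1) * hAmul + ((j : ℝ) + 1) * hmμ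
        have hamgm := amgm_aux μ c A hμ0 hc0 j hrel
        -- choose identities
        have hmj : ((m - j : ℕ) : ℝ) = (m : ℝ) - j := Nat.cast_sub hjm
        have N1 : (m + 1) * Nat.choose m (j + 1) = (m - j) * Nat.choose (m + 1) (j + 1) := by
          calc (m + 1) * Nat.choose m (j + 1)
              = Nat.choose (m + 1) (j + 2) * (j + 2) := by
                simpa using Nat.add_one_mul_choose_eq m (j + 1)
            _ = Nat.choose (m + 1) (j + 1) * (m + 1 - (j + 1)) :=
                Nat.choose_succ_right_eq (m + 1) (j + 1)
            _ = (m - j) * Nat.choose (m + 1) (j + 1) := by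
                rw [show m + 1 - (j + 1) = m - j by omega, mul_comm]
        have N2 : (m + 1) * Nat.choose m j = (j + 1) * Nat.choose (m + 1) (j + 1) := by
          have h1 := Nat.add_one_mul_choose_eq m j
          simpa [mul_comm] using h1
        have N1R : ((m : ℝ) + 1) * (Nat.choose m (j + 1) : ℝ)
            = ((m : ℝ) - j) * (Nat.choose (m + 1) (j + 1) : ℝ) := by
          calc ((m : ℝ) + 1) * (Nat.choose m (j + 1) : ℝ)
              = (((m + 1) * Nat.choose m (j + 1) : ℕ) : ℝ) := by push_cast; ring
            _ = (((m - j) * Nat.choose (m + 1) (j + 1) : ℕ) : ℝ) := by rw [N1]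
            _ = ((m : ℝ) - j) * (Nat.choose (m + 1) (j + 1) : ℝ) := by
                rw [Nat.cast_mul, hmj]
        have N2R : ((m : ℝ) + 1) * (Nat.choose m j : ℝ)
            = ((j : ℝ) + 1) * (Nat.choose (m + 1) (j + 1) : ℝ) := by
          calc ((m : ℝ) + 1) * (Nat.choose m j : ℝ)
              = (((m + 1) * Nat.choose m j : ℕ) : ℝ) := by push_cast; ring
            _ = (((j + 1) * Nat.choose (m + 1) (j + 1) : ℕ) : ℝ) := by rw [N2]
            _ = ((j : ℝ) + 1) * (Nat.choose (m + 1) (j + 1) : ℝ) := by push_cast; ring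
        have hident : (m.choose (j + 1) : ℝ) * μ ^ (j + 1) + t * ((m.choose j : ℝ) * μ ^ j)
            = ((m + 1).choose (j + 1) : ℝ) * (μ ^ j * c) := by
          apply mul_left_cancel₀ hm1
          rw [pow_succ]
          linear_combination (μ ^ j * μ) * N1R + (t * μ ^ j) * N2R
            - (((m + 1).choose (j + 1) : ℝ) * μ ^ j) * hcmul
        calc ∑ P' ∈ (Finset.cons a s ha).powersetCard (j + 1), ∏ p ∈ P', x p
            ≤ (m.choose (j + 1) : ℝ) * μ ^ (j + 1) + t * ((m.choose j : ℝ) * μ ^ j) := hbound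
          _ = ((m + 1).choose (j + 1) : ℝ) * (μ ^ j * c) := hident
          _ ≤ ((m + 1).choose (j + 1) : ℝ) * A ^ (j + 1) := by
              exact mul_le_mul_of_nonneg_left hamgm (Nat.cast_nonneg _)
          _ = ((m + 1).choose (j + 1) : ℝ) * ((t + S') / (↑m + 1)) ^ (j + 1) := by rw [hA]
          _ = _ := by simp only [hm, hS', ht]; push_cast; ring_nf
      · -- degenerate case j > m
        have h1 : Nat.choose m (j + 1) = 0 := Nat.choose_eq_zero_of_lt (by omega)
        have h2 : Nat.choose m j = 0 := Nat.choose_eq_zero_of_lt (by omega)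
        have h3 : Nat.choose (m + 1) (j + 1) = 0 := Nat.choose_eq_zero_of_lt (by omega)
        rw [h3]
        simp only [Nat.cast_zero, zero_mul]
        calc ∑ P' ∈ (Finset.cons a s ha).powersetCard (j + 1), ∏ p ∈ P', x p
            ≤ (m.choose (j + 1) : ℝ) * μ ^ (j + 1) + t * ((m.choose j : ℝ) * μ ^ j) := hbound
          _ = 0 := by rw [h1, h2]; simp

/-- Maclaurin-type averaging bound: the average over all `i`-element subsets `P'` of `P`
of `∏_{p ∈ P'} (1 - f p)` is at most `(1 - (∑_{p ∈ P} f p)/|P|)^i`. -/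
theorem stmt0 {α : Type*} [DecidableEq α] (P : Finset α) (hP : P.Nonempty)
    (f : α → ℝ) (hf0 : ∀ p ∈ P, 0 ≤ f p) (hf1 : ∀ p ∈ P, f p ≤ 1)
    (i : ℕ) (hi1 : 1 ≤ i) (hiP : i ≤ P.card) :
    (1 / (P.card.choose i : ℝ)) *
        ∑ P' ∈ P.powersetCard i, ∏ p ∈ P', (1 - f p)
      ≤ (1 - (∑ p ∈ P, f p) / P.card) ^ i := by
  have hx : ∀ p ∈ P, 0 ≤ 1 - f p := fun p hp => by linarith [hf1 p hp]
  have hkey := key_maclaurin (fun p => 1 - f p) P hx i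
  have hC : 0 < (P.card.choose i : ℝ) := by
    exact_mod_cast Nat.choose_pos hiP
  have hcard : (0:ℝ) < P.card := by
    exact_mod_cast Finset.card_pos.2 hP
  have hsum : ∑ p ∈ P, (1 - f p) = (P.card : ℝ) - ∑ p ∈ P, f p := by
    rw [Finset.sum_sub_distrib, Finset.sum_const, nsmul_eq_mul, mul_one]
  have hmean : (∑ p ∈ P, (1 - f p)) / (P.card : ℝ) = 1 - (∑ p ∈ P, f p) / P.card := by
    rw [hsum]
    field_simp
  rw [hmean] at hkey
  rw [one_div, inv_mul_le_iff₀ hC]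
  linarith [hkey]
end

section
/- Let Π be a finite multiset of paths (each a finite set of vertices) over an n-element vertex set V, and for each π ∈ Π let suff(π) ⊆ π be a designated subset with |suff(π)| ≥ |π|/c for a constant c ≥ 1. Define suffdeg(v) as the number of paths whose suffix contains v, and deg(v) as the number of paths containing v, with d = (1/n)∑_v deg(v). If every path satisfies |π| ≥ L/λ and additionally ∑_v suffdeg(v) ≥ (1/c)∑_v deg(v), then there exists a path π_b ∈ Π with ∑_{v ∈ π_b} suffdeg(v) ≥ L·d/(c²·λ). -/
open Finset

lemma double_count {V ι : Type*} [Fintype V] [Fintype ι] [DecidableEq V]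
    (A : ι → Finset V) (g : V → ℝ) :
    ∑ i : ι, ∑ v ∈ A i, g v
      = ∑ v : V, ((Finset.univ.filter fun i => v ∈ A i).card : ℝ) * g v := by
  classical
  have h : ∀ i : ι, ∑ v ∈ A i, g v = ∑ v : V, if v ∈ A i then g v else 0 := by
    intro i
    rw [Finset.sum_ite_mem, Finset.univ_inter]
  simp_rw [h]
  rw [Finset.sum_comm]
  congr 1
  funext v
  rw [← Finset.sum_filter, Finset.sum_const, nsmul_eq_mul]

/-- Base Path lemma: there is a path `π_b` whose vertices carry total suffix-degree
at least `L·d/(c²·λ)`. -/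
theorem stmt5 {V ι : Type*} [Fintype V] [Fintype ι] [DecidableEq V] [Nonempty ι]
    (pth suff : ι → Finset V)
    (hsub : ∀ i, suff i ⊆ pth i)
    (c L lam : ℝ) (hc : 1 ≤ c) (hL : 0 < L) (hlam : 1 ≤ lam)
    (hsuffcard : ∀ i, ((pth i).card : ℝ) / c ≤ ((suff i).card : ℝ))
    (hlen : ∀ i, L / lam ≤ ((pth i).card : ℝ))
    (n : ℕ) (hn : n = Fintype.card V) (hn0 : 0 < n)
    (suffdeg deg : V → ℕ)
    (hsuffdeg : ∀ v, suffdeg v = (Finset.univ.filter fun i => v ∈ suff i).card)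
    (hdeg : ∀ v, deg v = (Finset.univ.filter fun i => v ∈ pth i).card)
    (d : ℝ) (hd : d = (∑ v, (deg v : ℝ)) / n)
    (hineq : (1 / c) * ∑ v, (deg v : ℝ) ≤ ∑ v, (suffdeg v : ℝ)) :
    ∃ i : ι, L * d / (c ^ 2 * lam) ≤ ∑ v ∈ pth i, (suffdeg v : ℝ) := by
  classical
  set S : ℝ := ∑ v, (suffdeg v : ℝ) with hS
  set D : ℝ := ∑ v, (deg v : ℝ) with hD
  have hc0 : (0:ℝ) < c := lt_of_lt_of_le one_pos hc
  have hlam0 : (0:ℝ) < lam := lt_of_lt_of_le one_pos hlam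
  have hnR : (0:ℝ) < (n:ℝ) := by exact_mod_cast hn0
  have hm0 : (0:ℝ) < (Fintype.card ι : ℝ) := by exact_mod_cast Fintype.card_pos
  set m : ℝ := (Fintype.card ι : ℝ) with hm
  have hD0 : 0 ≤ D := by
    rw [hD]; positivity
  have hd0 : 0 ≤ d := by rw [hd]; positivity
  -- double counting for deg : D = ∑ i, |pth i|
  have hDeq : D = ∑ i : ι, ((pth i).card : ℝ) := by
    have := double_count pth (fun _ => (1:ℝ))
    simp only [mul_one, Finset.sum_const, nsmul_eq_mul] at this
    rw [hD]
    simp_rw [hdeg]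
    rw [← this]
  -- path length lower bound : m * (L/lam) ≤ D
  have hDlb : m * (L / lam) ≤ D := by
    rw [hDeq, hm]
    calc (Fintype.card ι : ℝ) * (L / lam) = ∑ _i : ι, (L / lam) := by
          rw [Finset.sum_const, nsmul_eq_mul]; rfl
      _ ≤ ∑ i : ι, ((pth i).card : ℝ) := Finset.sum_le_sum fun i _ => hlen i
  -- ∑ i, ∑ v ∈ suff i, suffdeg v = ∑ v, suffdeg v ^ 2
  have hkey : ∑ i : ι, ∑ v ∈ suff i, (suffdeg v : ℝ) = ∑ v, (suffdeg v : ℝ) ^ 2 := by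
    rw [double_count suff (fun v => (suffdeg v : ℝ))]
    congr 1; funext v
    rw [sq, ← hsuffdeg v]
  -- Cauchy–Schwarz : S^2 ≤ n * ∑ suffdeg^2
  have hCS : S ^ 2 ≤ (n : ℝ) * ∑ v, (suffdeg v : ℝ) ^ 2 := by
    have := sq_sum_le_card_mul_sum_sq (s := (univ : Finset V))
      (f := fun v => (suffdeg v : ℝ))
    simpa [hn, hS] using this
  -- lower bound on the total T
  set T : ℝ := ∑ i : ι, ∑ v ∈ pth i, (suffdeg v : ℝ) with hT
  have hT1 : ∑ i : ι, ∑ v ∈ suff i, (suffdeg v : ℝ) ≤ T := by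
    apply Finset.sum_le_sum
    intro i _
    exact Finset.sum_le_sum_of_subset_of_nonneg (hsub i) (by intros; positivity)
  have hSlb : D / c ≤ S := by
    calc D / c = 1 / c * D := by ring
      _ ≤ S := hineq
  have hDc0 : 0 ≤ D / c := by positivity
  have hT2 : (D / c) ^ 2 / n ≤ T := by
    have h1 : (D / c) ^ 2 ≤ S ^ 2 := by
      apply pow_le_pow_left₀ hDc0 hSlb
    have h2 : S ^ 2 ≤ (n : ℝ) * T :=
      le_trans hCS (mul_le_mul_of_nonneg_left (hkey ▸ hT1) hnR.le)
    rw [div_le_iff₀ hnR]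
    nlinarith
  -- D = n * d
  have hDnd : D = n * d := by
    rw [hd]; field_simp
  have hTfinal : m * (L * d / (c ^ 2 * lam)) ≤ T := by
    have hDsq : (D / c) ^ 2 / n = D * d / c ^ 2 := by
      rw [hDnd]; field_simp
    have h3 : m * (L / lam) * d / c ^ 2 ≤ D * d / c ^ 2 := by
      apply div_le_div_of_nonneg_right _ (by positivity)
      exact mul_le_mul_of_nonneg_right hDlb hd0
    calc m * (L * d / (c ^ 2 * lam)) = m * (L / lam) * d / c ^ 2 := by ring
      _ ≤ D * d / c ^ 2 := h3
      _ = (D / c) ^ 2 / n := hDsq.symm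
      _ ≤ T := hT2
  obtain ⟨i, _, hi⟩ := Finset.exists_le_of_sum_le (Finset.univ_nonempty (α := ι))
    (f := fun _ : ι => L * d / (c ^ 2 * lam)) (g := fun i => ∑ v ∈ pth i, (suffdeg v : ℝ))
    (by
      rw [Finset.sum_const, nsmul_eq_mul]
      exact hTfinal)
  exact ⟨i, hi⟩
end

section
/- Every directed path π on ℓ ≥ 1 vertices admits a set S of at most 4ℓ·(log₂ ℓ + 1) ordered pairs of its vertices such that: (1) for each (u,v) ∈ S there is a directed path from u to v in G; and (2) for any two vertices x, y of π such that y is reachable from x in G, either x = y, or (x,y) ∈ S, or there exists m with (x,m) ∈ S and (m,y) ∈ S. -/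
/-- 2-hop shortcut set: every directed path on `ℓ ≥ 1` vertices admits a set `S` of at most
`4ℓ(log₂ ℓ + 1)` reachable ordered pairs such that any reachable pair of path vertices is
connected by at most 2 edges of `S`. -/
theorem stmt9 {V : Type*} [DecidableEq V] (E : V → V → Prop) (ℓ : ℕ) (hℓ : 1 ≤ ℓ)
    (x : ℕ → V) (hpath : ∀ i, i + 1 < ℓ → E (x i) (x (i + 1))) :
    ∃ S : Finset (V × V),
      (S.card : ℝ) ≤ 4 * ℓ * (Real.logb 2 ℓ + 1) ∧
      (∀ p ∈ S, Relation.ReflTransGen E p.1 p.2) ∧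
      (∀ i j, i < ℓ → j < ℓ → Relation.ReflTransGen E (x i) (x j) →
        x i = x j ∨ (x i, x j) ∈ S ∨ ∃ m, (x i, m) ∈ S ∧ (m, x j) ∈ S) := by
  classical
  -- reachability along the path
  have hreach : ∀ p q, p ≤ q → q < ℓ → Relation.ReflTransGen E (x p) (x q) := by
    intro p q hpq hq
    induction q, hpq using Nat.le_induction with
    | base => exact Relation.ReflTransGen.refl
    | succ q hpq ih =>
        exact Relation.ReflTransGen.tail (ih (by omega)) (hpath q hq)
  set L : ℕ := Nat.log 2 ℓ + 1 with hL
  have hℓ2L : ℓ < 2 ^ L := Nat.lt_pow_succ_log_self (by norm_num) ℓ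
  -- the dyadic median function
  set med : ℕ → ℕ → ℕ := fun t i => i / 2 ^ t * 2 ^ t + 2 ^ (t - 1) with hmeddef
  -- key median lemma
  have hmed : ∀ a b, a < b → b < ℓ →
      ∃ t, 1 ≤ t ∧ t ≤ L ∧ a < med t a ∧ med t a ≤ b ∧ med t a = med t b := by
    intro a b hab hb
    have ha : a < ℓ := lt_trans hab hb
    have hex : ∃ t, 1 ≤ t ∧ a / 2 ^ t = b / 2 ^ t := by
      refine ⟨L, by omega, ?_⟩
      rw [Nat.div_eq_of_lt (lt_trans ha hℓ2L), Nat.div_eq_of_lt (lt_trans hb hℓ2L)]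
    set t := Nat.find hex with ht
    obtain ⟨ht1, hteq⟩ := Nat.find_spec hex
    have htL : t ≤ L := Nat.find_min' hex ⟨by omega, by
      rw [Nat.div_eq_of_lt (lt_trans ha hℓ2L), Nat.div_eq_of_lt (lt_trans hb hℓ2L)]⟩
    set k := t - 1 with hk
    have htk : t = k + 1 := by omega
    have hne : a / 2 ^ k ≠ b / 2 ^ k := by
      rcases Nat.eq_or_lt_of_le ht1 with h1 | h2
      · have hk0 : k = 0 := by omega
        simpa [hk0] using Nat.ne_of_lt hab
      · have hlt : k < t := by omega
        have := Nat.find_min hex hlt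
        push_neg at this
        exact this (by omega)
    set u := a / 2 ^ k with hu
    set v := b / 2 ^ k with hv
    have hu2 : u / 2 = a / 2 ^ (k + 1) := by
      rw [hu, Nat.div_div_eq_div_mul, ← pow_succ]
    have hv2 : v / 2 = b / 2 ^ (k + 1) := by
      rw [hv, Nat.div_div_eq_div_mul, ← pow_succ]
    have huv2 : u / 2 = v / 2 := by rw [hu2, hv2, ← htk, hteq]
    have hulev : u ≤ v := Nat.div_le_div_right (le_of_lt hab)
    have hu0 : u % 2 = 0 ∧ v = u + 1 := by omega
    -- med t a = (u+1) * 2^k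
    have hmeda : med t a = (u + 1) * 2 ^ k := by
      rw [hmeddef, htk]
      simp only
      rw [← hu2]
      have : u = 2 * (u / 2) := by omega
      rw [pow_succ]
      calc u / 2 * (2 ^ k * 2) + 2 ^ (k + 1 - 1) = (2 * (u / 2) + 1) * 2 ^ k := by
            simp; ring
        _ = (u + 1) * 2 ^ k := by rw [← this]
    have hmedb : med t a = med t b := by
      rw [hmeddef, htk]
      simp only
      rw [← hu2, ← hv2, huv2]
    have haless : a < med t a := by
      rw [hmeda]
      have h0 : 0 < 2 ^ k := Nat.pow_pos (by norm_num)
      have : a / 2 ^ k < u + 1 := by omega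
      exact (Nat.div_lt_iff_lt_mul h0).mp this
    have hmle : med t a ≤ b := by
      rw [hmeda]
      have : (u + 1) * 2 ^ k = v * 2 ^ k := by rw [hu0.2]
      rw [this, hv]
      exact Nat.div_mul_le_self b (2 ^ k)
    exact ⟨t, ht1, htL, haless, hmle, hmedb⟩
  -- the shortcut set
  set base : Finset (ℕ × ℕ) := Finset.range ℓ ×ˢ Finset.Icc 1 L with hbase
  set S : Finset (V × V) :=
    ((base.image fun q => (x q.1, x (med q.2 q.1))) ∪
      (base.image fun q => (x (med q.2 q.1), x q.1))).filter
      (fun p => Relation.ReflTransGen E p.1 p.2) with hS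
  refine ⟨S, ?_, ?_, ?_⟩
  · -- cardinality bound
    have hcard : S.card ≤ 2 * (ℓ * L) := by
      calc S.card ≤ ((base.image fun q => (x q.1, x (med q.2 q.1))) ∪
            (base.image fun q => (x (med q.2 q.1), x q.1))).card := Finset.card_filter_le _ _
        _ ≤ (base.image fun q => (x q.1, x (med q.2 q.1))).card +
            (base.image fun q => (x (med q.2 q.1), x q.1)).card := Finset.card_union_le _ _
        _ ≤ base.card + base.card :=
            Nat.add_le_add (Finset.card_image_le) (Finset.card_image_le)
        _ = 2 * (ℓ * L) := by
            rw [hbase, Finset.card_product, Finset.card_range, Nat.card_Icc,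
              Nat.add_sub_cancel]
            ring
    have hlogle : (Nat.log 2 ℓ : ℝ) ≤ Real.logb 2 ℓ := by
      have h1 : (2 : ℕ) ^ Nat.log 2 ℓ ≤ ℓ := Nat.pow_log_le_self 2 (by omega)
      have h2 : ((2 : ℝ)) ^ (Nat.log 2 ℓ : ℝ) ≤ (ℓ : ℝ) := by
        rw [Real.rpow_natCast]
        exact_mod_cast h1
      exact (Real.le_logb_iff_rpow_le (by norm_num) (by positivity)).mpr h2
    have hlognn : 0 ≤ Real.logb 2 ℓ :=
      Real.logb_nonneg (by norm_num) (by exact_mod_cast hℓ)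
    have hcardR : (S.card : ℝ) ≤ 2 * (ℓ * L) := by exact_mod_cast hcard
    have hLR : (L : ℝ) = (Nat.log 2 ℓ : ℝ) + 1 := by rw [hL]; push_cast; ring
    have hℓR : (1 : ℝ) ≤ (ℓ : ℝ) := by exact_mod_cast hℓ
    calc (S.card : ℝ) ≤ 2 * (ℓ * L) := hcardR
      _ = 2 * (ℓ : ℝ) * ((Nat.log 2 ℓ : ℝ) + 1) := by rw [hLR]; ring
      _ ≤ 4 * ℓ * (Real.logb 2 ℓ + 1) := by nlinarith
  · intro p hp
    rw [hS, Finset.mem_filter] at hp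
    exact hp.2
  · intro i j hi hj hre
    by_cases hxeq : x i = x j
    · exact Or.inl hxeq
    have hij : i ≠ j := by rintro rfl; exact hxeq rfl
    right; right
    have hmemS : ∀ (a b : V), (a, b) ∈ ((base.image fun q => (x q.1, x (med q.2 q.1))) ∪
        (base.image fun q => (x (med q.2 q.1), x q.1))) →
        Relation.ReflTransGen E a b → (a, b) ∈ S := by
      intro a b hm hr
      rw [hS, Finset.mem_filter]
      exact ⟨hm, hr⟩
    rcases lt_or_gt_of_ne hij with hlt | hgt
    · -- i < j : median m between i and j
      obtain ⟨t, ht1, htL, hless, hmle, hmeq⟩ := hmed i j hlt hj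
      refine ⟨x (med t i), ?_, ?_⟩
      · refine hmemS _ _ (Finset.mem_union_left _ ?_) ?_
        · exact Finset.mem_image.mpr ⟨(i, t), by
            rw [hbase]; exact Finset.mem_product.mpr
              ⟨Finset.mem_range.mpr hi, Finset.mem_Icc.mpr ⟨ht1, htL⟩⟩, rfl⟩
        · exact hreach i (med t i) (le_of_lt hless) (lt_of_le_of_lt hmle hj)
      · refine hmemS _ _ (Finset.mem_union_right _ ?_) ?_
        · refine Finset.mem_image.mpr ⟨(j, t), by
            rw [hbase]; exact Finset.mem_product.mpr
              ⟨Finset.mem_range.mpr hj, Finset.mem_Icc.mpr ⟨ht1, htL⟩⟩, ?_⟩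
          simp only [← hmeq]
        · exact hreach (med t i) j hmle hj
    · -- j < i : median m between j and i
      obtain ⟨t, ht1, htL, hless, hmle, hmeq⟩ := hmed j i hgt hi
      refine ⟨x (med t j), ?_, ?_⟩
      · refine hmemS _ _ (Finset.mem_union_left _ ?_) ?_
        · refine Finset.mem_image.mpr ⟨(i, t), by
            rw [hbase]; exact Finset.mem_product.mpr
              ⟨Finset.mem_range.mpr hi, Finset.mem_Icc.mpr ⟨ht1, htL⟩⟩, ?_⟩
          simp only [← hmeq]
        · exact hre.trans (hreach j (med t j) (le_of_lt hless) (lt_of_le_of_lt hmle hi))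
      · refine hmemS _ _ (Finset.mem_union_right _ ?_) ?_
        · exact Finset.mem_image.mpr ⟨(j, t), by
            rw [hbase]; exact Finset.mem_product.mpr
              ⟨Finset.mem_range.mpr hj, Finset.mem_Icc.mpr ⟨ht1, htL⟩⟩, rfl⟩
        · exact (hreach (med t j) i hmle hi).trans hre
end

section
/- Let P be a finite set with |P| = N, and suppose demand pairs are selected one at a time uniformly at random without replacement from P. Fix a pair (u,v) assigned a value val_{s,t}(u,v) ∈ [0,1] for each (s,t) ∈ P, with total val(u,v) = ∑_{(s,t)} val_{s,t}(u,v) > 0, and suppose that in a round selecting pair (s,t), an event 'separate (u,v)' occurs independently with probability at least val_{s,t}(u,v). Then the probability that (u,v) is not separated within the first i rounds is at most e^{-i·val(u,v)/N}. -/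
open MeasureTheory

open Finset

set_option linter.unusedSectionVars false

namespace Stmt10Aux

variable {P : Type*} [Fintype P] [DecidableEq P]

noncomputable def Tsum (i : ℕ) (a : P → ℝ) : ℝ := ∑ f : Fin i ↪ P, ∏ t, a (f t)

lemma Tsum_const (i : ℕ) (m : ℝ) :
    Tsum i (fun _ => m : P → ℝ) = (Fintype.card P).descFactorial i * m ^ i := by
  unfold Tsum
  simp [Finset.prod_const, Finset.card_univ, Fintype.card_embedding_eq, Fintype.card_fin,
    mul_comm]

lemma card_filter_le_one (i : ℕ) (f : Fin i ↪ P) (p : P) :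
    (univ.filter fun t => f t = p).card ≤ 1 := by
  rw [card_le_one]
  intro s hs t ht
  rw [mem_filter] at hs ht
  exact f.injective (hs.2.trans ht.2.symm)

lemma prod_update_update (i : ℕ) (a : P → ℝ) (p q : P) (hpq : p ≠ q) (x y : ℝ)
    (f : Fin i ↪ P) :
    (∏ t, Function.update (Function.update a p x) q y (f t)) =
      x ^ (univ.filter fun t => f t = p).card * y ^ (univ.filter fun t => f t = q).card *
        ∏ t ∈ univ.filter fun t => f t ≠ p ∧ f t ≠ q, a (f t) := by
  classical
  rw [← prod_filter_mul_prod_filter_not univ (fun t => f t = p)]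
  rw [← prod_filter_mul_prod_filter_not (univ.filter fun t => ¬ f t = p) (fun t => f t = q)]
  rw [filter_filter, filter_filter]
  have h1 : ∏ t ∈ univ.filter fun t => f t = p,
      Function.update (Function.update a p x) q y (f t) = x ^ (univ.filter fun t => f t = p).card := by
    rw [Finset.prod_congr rfl (g := fun _ => x) ?_, prod_const]
    intro t ht
    rw [mem_filter] at ht
    rw [ht.2, Function.update_of_ne hpq, Function.update_self]
  have hset : (univ.filter fun t => ¬ f t = p ∧ f t = q) = univ.filter fun t => f t = q := by
    apply filter_congr
    intro t _
    constructor
    · exact fun h => h.2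
    · exact fun h => ⟨by rw [h]; exact fun hc => hpq hc.symm, h⟩
  have h2 : ∏ t ∈ univ.filter fun t => ¬ f t = p ∧ f t = q,
      Function.update (Function.update a p x) q y (f t) = y ^ (univ.filter fun t => f t = q).card := by
    rw [hset, Finset.prod_congr rfl (g := fun _ => y) ?_, prod_const]
    intro t ht
    rw [mem_filter] at ht
    rw [ht.2, Function.update_self]
  have h3 : ∏ t ∈ univ.filter fun t => ¬ f t = p ∧ ¬ f t = q,
      Function.update (Function.update a p x) q y (f t)
      = ∏ t ∈ univ.filter fun t => f t ≠ p ∧ f t ≠ q, a (f t) := by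
    apply Finset.prod_congr rfl
    intro t ht
    rw [mem_filter] at ht
    rw [Function.update_of_ne ht.2.2, Function.update_of_ne ht.2.1]
  rw [h1, h2, h3]
  ring

lemma Tstep (i : ℕ) (a : P → ℝ) (ha : ∀ r, 0 ≤ a r) (p q : P) (hpq : p ≠ q)
    (m : ℝ) (h1 : a p ≤ m) (h2 : m ≤ a q) :
    Tsum i a ≤ Tsum i (Function.update (Function.update a p m) q (a p + a q - m)) := by
  classical
  set Ep : (Fin i ↪ P) → ℕ := fun f => (univ.filter fun t => f t = p).card with hEp
  set Eq' : (Fin i ↪ P) → ℕ := fun f => (univ.filter fun t => f t = q).card with hEq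
  set c : (Fin i ↪ P) → ℝ := fun f => ∏ t ∈ univ.filter fun t => f t ≠ p ∧ f t ≠ q, a (f t)
    with hc
  have hcnn : ∀ f, 0 ≤ c f := fun f => Finset.prod_nonneg fun t _ => ha _
  have hU : ∀ x y : ℝ, Tsum i (Function.update (Function.update a p x) q y)
      = ∑ f : Fin i ↪ P, x ^ Ep f * y ^ Eq' f * c f :=
    fun x y => Finset.sum_congr rfl fun f _ => prod_update_update i a p q hpq x y f
  have hA : Tsum i a = ∑ f : Fin i ↪ P, (a p) ^ Ep f * (a q) ^ Eq' f * c f := by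
    rw [← hU (a p) (a q)]
    congr 1
    simp [Function.update_eq_self]
  rw [hA, hU, ← sub_nonneg, ← Finset.sum_sub_distrib]
  -- the swap bijection
  set σ : (Fin i ↪ P) → (Fin i ↪ P) := fun f => f.trans (Equiv.swap p q).toEmbedding with hσ
  have hσapp : ∀ f t, σ f t = Equiv.swap p q (f t) := fun f t => rfl
  have hσp : ∀ f, Ep (σ f) = Eq' f := by
    intro f
    apply congrArg Finset.card
    apply filter_congr
    intro t _
    rw [hσapp]
    rw [(Equiv.swap p q).apply_eq_iff_eq_symm_apply, Equiv.symm_swap, Equiv.swap_apply_left]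
  have hσq : ∀ f, Eq' (σ f) = Ep f := by
    intro f
    apply congrArg Finset.card
    apply filter_congr
    intro t _
    rw [hσapp]
    rw [(Equiv.swap p q).apply_eq_iff_eq_symm_apply, Equiv.symm_swap, Equiv.swap_apply_right]
  have hσc : ∀ f, c (σ f) = c f := by
    intro f
    simp only [hc]
    have hset : (univ.filter fun t => σ f t ≠ p ∧ σ f t ≠ q)
        = univ.filter fun t => f t ≠ p ∧ f t ≠ q := by
      apply filter_congr
      intro t _
      rw [hσapp]
      constructor
      · intro h
        refine ⟨fun hc' => h.2 ?_, fun hc' => h.1 ?_⟩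
        · rw [hc', Equiv.swap_apply_left]
        · rw [hc', Equiv.swap_apply_right]
      · intro h
        rw [Equiv.swap_apply_of_ne_of_ne h.1 h.2]
        exact h
    simp only [hset]
    apply Finset.prod_congr rfl
    intro t ht
    rw [mem_filter] at ht
    rw [hσapp, Equiv.swap_apply_of_ne_of_ne ht.2.1 ht.2.2]
  have hσσ : ∀ f, σ (σ f) = f := by
    intro f
    ext t
    simp [hσapp]
  -- partition
  set D : (Fin i ↪ P) → ℝ :=
    fun f => m ^ Ep f * (a p + a q - m) ^ Eq' f * c f - (a p) ^ Ep f * (a q) ^ Eq' f * c f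
    with hD
  have hsplit : ∑ f : Fin i ↪ P, D f
      = ∑ f ∈ univ.filter (fun f => Ep f = 1 ∧ Eq' f = 1), D f
      + ∑ f ∈ univ.filter (fun f => Ep f = 1 ∧ ¬ Eq' f = 1), D f
      + (∑ f ∈ univ.filter (fun f => ¬ Ep f = 1 ∧ Eq' f = 1), D f
      + ∑ f ∈ univ.filter (fun f => ¬ Ep f = 1 ∧ ¬ Eq' f = 1), D f) := by
    rw [← sum_filter_add_sum_filter_not univ (fun f => Ep f = 1) D]
    rw [← sum_filter_add_sum_filter_not (univ.filter fun f => Ep f = 1) (fun f => Eq' f = 1) D]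
    rw [← sum_filter_add_sum_filter_not (univ.filter fun f => ¬ Ep f = 1) (fun f => Eq' f = 1) D]
    rw [filter_filter, filter_filter, filter_filter, filter_filter]
  have epzero : ∀ f : Fin i ↪ P, ¬ Ep f = 1 → Ep f = 0 := by
    intro f h
    simp only [hEp] at h ⊢
    have := card_filter_le_one i f p
    omega
  have eqzero : ∀ f : Fin i ↪ P, ¬ Eq' f = 1 → Eq' f = 0 := by
    intro f h
    simp only [hEq] at h ⊢
    have := card_filter_le_one i f q
    omega
  have h11 : 0 ≤ ∑ f ∈ univ.filter (fun f => Ep f = 1 ∧ Eq' f = 1), D f := by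
    apply Finset.sum_nonneg
    intro f hf
    rw [mem_filter] at hf
    rw [hD]
    simp only [hf.2.1, hf.2.2, pow_one]
    have : m * (a p + a q - m) * c f - a p * a q * c f = (m - a p) * (a q - m) * c f := by ring
    rw [this]
    have h1' : 0 ≤ m - a p := by linarith
    have h2' : 0 ≤ a q - m := by linarith
    exact mul_nonneg (mul_nonneg h1' h2') (hcnn f)
  have h10 : ∑ f ∈ univ.filter (fun f => Ep f = 1 ∧ ¬ Eq' f = 1), D f
      = (m - a p) * ∑ f ∈ univ.filter (fun f => Ep f = 1 ∧ ¬ Eq' f = 1), c f := by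
    rw [Finset.mul_sum]
    apply Finset.sum_congr rfl
    intro f hf
    rw [mem_filter] at hf
    rw [hD]
    simp only [hf.2.1, eqzero f hf.2.2, pow_one, pow_zero]
    ring
  have h01 : ∑ f ∈ univ.filter (fun f => ¬ Ep f = 1 ∧ Eq' f = 1), D f
      = (a p - m) * ∑ f ∈ univ.filter (fun f => ¬ Ep f = 1 ∧ Eq' f = 1), c f := by
    rw [Finset.mul_sum]
    apply Finset.sum_congr rfl
    intro f hf
    rw [mem_filter] at hf
    rw [hD]
    simp only [hf.2.2, epzero f hf.2.1, pow_one, pow_zero]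
    ring
  have h00 : ∑ f ∈ univ.filter (fun f => ¬ Ep f = 1 ∧ ¬ Eq' f = 1), D f = 0 := by
    apply Finset.sum_eq_zero
    intro f hf
    rw [mem_filter] at hf
    rw [hD]
    simp only [epzero f hf.2.1, eqzero f hf.2.2, pow_zero]
    ring
  have hBeq : ∑ f ∈ univ.filter (fun f => Ep f = 1 ∧ ¬ Eq' f = 1), c f
      = ∑ f ∈ univ.filter (fun f => ¬ Ep f = 1 ∧ Eq' f = 1), c f := by
    apply Finset.sum_nbij' σ σ
    · intro f hf
      rw [mem_filter] at hf ⊢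
      refine ⟨mem_univ _, ?_, ?_⟩
      · rw [hσp]; exact hf.2.2
      · rw [hσq]; exact hf.2.1
    · intro f hf
      rw [mem_filter] at hf ⊢
      refine ⟨mem_univ _, ?_, ?_⟩
      · rw [hσp]; exact hf.2.2
      · rw [hσq]; exact hf.2.1
    · intro f _; exact hσσ f
    · intro f _; exact hσσ f
    · intro f _; exact (hσc f).symm
  rw [hsplit, h10, h01, h00, hBeq]
  have hB := Finset.sum_nonneg (s := univ.filter (fun f => ¬ Ep f = 1 ∧ Eq' f = 1))
    (fun f _ => hcnn f)
  nlinarith [h11]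


lemma Tsum_le_aux (i : ℕ) (m : ℝ) (hm : 0 ≤ m) :
    ∀ n : ℕ, ∀ a : P → ℝ, (∀ p, 0 ≤ a p) → (∑ p, a p = Fintype.card P * m) →
      (univ.filter fun p => a p ≠ m).card ≤ n →
      Tsum i a ≤ (Fintype.card P).descFactorial i * m ^ i := by
  intro n
  induction n with
  | zero =>
    intro a ha hsum hcard
    have hall : ∀ p, a p = m := by
      intro p
      by_contra h
      have hmem : p ∈ univ.filter fun p => a p ≠ m := mem_filter.2 ⟨mem_univ _, h⟩
      have : (univ.filter fun p => a p ≠ m) = ∅ := card_eq_zero.1 (Nat.le_zero.1 hcard)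
      rw [this] at hmem
      exact absurd hmem (notMem_empty _)
    have : a = fun _ => m := funext hall
    rw [this, Tsum_const]
  | succ n ih =>
    intro a ha hsum hcard
    by_cases hall : ∀ p, a p = m
    · have : a = fun _ => m := funext hall
      rw [this, Tsum_const]
    · push_neg at hall
      obtain ⟨p₀, hp₀⟩ := hall
      have hex : ∃ p q : P, a p < m ∧ m < a q := by
        have hlt : ∃ p, a p < m := by
          by_contra h
          push_neg at h
          rcases lt_or_gt_of_ne hp₀ with hh | hh
          · exact absurd (h p₀) (not_le.2 hh)
          · have : ∑ _p : P, m < ∑ p, a p :=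
              Finset.sum_lt_sum (fun r _ => h r) ⟨p₀, mem_univ _, hh⟩
            rw [Finset.sum_const, card_univ, nsmul_eq_mul, hsum] at this
            exact absurd this (lt_irrefl _)
        have hgt : ∃ q, m < a q := by
          by_contra h
          push_neg at h
          rcases lt_or_gt_of_ne hp₀ with hh | hh
          · have : ∑ p, a p < ∑ _p : P, m :=
              Finset.sum_lt_sum (fun r _ => h r) ⟨p₀, mem_univ _, hh⟩
            rw [Finset.sum_const, card_univ, nsmul_eq_mul, hsum] at this
            exact absurd this (lt_irrefl _)
          · exact absurd hh (not_lt.2 (h p₀))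
        obtain ⟨p, hp⟩ := hlt
        obtain ⟨q, hq⟩ := hgt
        exact ⟨p, q, hp, hq⟩
      obtain ⟨p, q, hp, hq⟩ := hex
      have hpq : p ≠ q := by
        intro h
        rw [h] at hp
        exact absurd (hp.trans hq) (lt_irrefl _)
      set a' := Function.update (Function.update a p m) q (a p + a q - m) with ha'
      have ha'q : a' q = a p + a q - m := Function.update_self _ _ _
      have ha'p : a' p = m := by
        rw [ha', Function.update_of_ne hpq, Function.update_self]
      have ha'r : ∀ r, r ≠ p → r ≠ q → a' r = a r := by
        intro r hrp hrq
        rw [ha', Function.update_of_ne hrq, Function.update_of_ne hrp]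
      refine (Tstep i a ha p q hpq m hp.le hq.le).trans (ih a' ?_ ?_ ?_)
      · intro r
        rcases eq_or_ne r q with rfl | hrq
        · rw [ha'q]; have := ha p; linarith
        rcases eq_or_ne r p with rfl | hrp
        · rw [ha'p]; exact hm
        · rw [ha'r r hrp hrq]; exact ha r
      · have hs1 : ∑ r, a' r = (a p + a q - m) + (m + ∑ r ∈ ((univ \ {q}) \ {p}), a r) := by
          rw [ha', Finset.sum_update_of_mem (mem_univ q)]
          congr 1
          exact Finset.sum_update_of_mem (by rw [mem_sdiff, mem_singleton]; exact ⟨mem_univ _, hpq⟩) _ _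
        have hs2 : ∑ r, a r = (∑ r ∈ ((univ \ {q}) \ {p}), a r + a p) + a q := by
          rw [Finset.sum_eq_sum_sdiff_singleton_add (mem_univ q) a]
          rw [Finset.sum_eq_sum_sdiff_singleton_add
            (show p ∈ univ \ {q} by rw [mem_sdiff, mem_singleton]; exact ⟨mem_univ _, hpq⟩) a]
        rw [hs1, ← hsum, hs2]
        ring
      · have hsub : (univ.filter fun r => a' r ≠ m) ⊆ (univ.filter fun r => a r ≠ m).erase p := by
          intro r hr
          rw [mem_filter] at hr
          rw [mem_erase, mem_filter]
          have hrp : r ≠ p := by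
            intro h
            rw [h, ha'p] at hr
            exact hr.2 rfl
          refine ⟨hrp, mem_univ _, ?_⟩
          rcases eq_or_ne r q with rfl | hrq
          · exact hq.ne'
          · rw [← ha'r r hrp hrq]; exact hr.2
        have hpmem : p ∈ univ.filter fun r => a r ≠ m := mem_filter.2 ⟨mem_univ _, hp.ne⟩
        have := Finset.card_le_card hsub
        rw [Finset.card_erase_of_mem hpmem] at this
        omega

lemma Tsum_le (i : ℕ) (a : P → ℝ) (ha : ∀ p, 0 ≤ a p) (hP : 0 < Fintype.card P) :
    Tsum i a ≤ (Fintype.card P).descFactorial i * ((∑ p, a p) / Fintype.card P) ^ i := by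
  have hN : (0 : ℝ) < Fintype.card P := by exact_mod_cast hP
  have hs : 0 ≤ ∑ p, a p := Finset.sum_nonneg fun p _ => ha p
  exact Tsum_le_aux i _ (div_nonneg hs hN.le) _ a ha (by field_simp) (le_refl _)

end Stmt10Aux


open MeasureTheory

/-- Concentration over random demand-pair orderings: if pairs are selected uniformly without
replacement and, conditionally on the selection `g`, separation in round `t` occurs with
probability at least `val (g t)`, then the probability that no separation occurs in the first
`i` rounds is at most `exp(-i·val(u,v)/N)`. -/
theorem stmt10 {Ω P : Type*} [Fintype P] [DecidableEq P]
    [MeasurableSpace Ω] (μ : Measure Ω) [IsProbabilityMeasure μ]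
    (N i : ℕ) (hN : Fintype.card P = N) (hi : i ≤ N)
    (val : P → ℝ) (hval0 : ∀ p, 0 ≤ val p) (hval1 : ∀ p, val p ≤ 1)
    (hpos : 0 < ∑ p, val p)
    (sel : Fin i → Ω → P) (Sep : Fin i → Set Ω)
    (hinj : ∀ ω, Function.Injective fun t => sel t ω)
    (hunif : ∀ g : Fin i → P, Function.Injective g →
      μ {ω | ∀ t, sel t ω = g t} = 1 / (N.descFactorial i : ENNReal))
    (hsep : ∀ g : Fin i → P, Function.Injective g →
      μ ({ω | ∀ t, sel t ω = g t} ∩ ⋂ t, (Sep t)ᶜ)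
        ≤ μ {ω | ∀ t, sel t ω = g t} * ENNReal.ofReal (∏ t, (1 - val (g t)))) :
    μ (⋂ t, (Sep t)ᶜ) ≤ ENNReal.ofReal (Real.exp (-(i : ℝ) * (∑ p, val p) / N)) := by
  classical
  subst hN
  set N := Fintype.card P with hNdef
  have hNe : Nonempty P := by
    by_contra h
    rw [not_nonempty_iff] at h
    rw [Finset.univ_eq_empty, Finset.sum_empty] at hpos
    exact absurd hpos (lt_irrefl _)
  have hNpos : 0 < N := Fintype.card_pos
  have hNR : (0 : ℝ) < N := by exact_mod_cast hNpos
  set V : ℝ := ∑ p, val p with hV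
  set d : ℕ := N.descFactorial i with hd
  have hd0 : d ≠ 0 := by
    rw [hd, Ne, Nat.descFactorial_eq_zero_iff_lt]
    omega
  set K : Set Ω := ⋂ t, (Sep t)ᶜ with hK
  have hcover : K ⊆ ⋃ f : Fin i ↪ P, ({ω | ∀ t, sel t ω = f t} ∩ K) := by
    intro ω hω
    exact Set.mem_iUnion.2 ⟨⟨fun t => sel t ω, hinj ω⟩, fun t => rfl, hω⟩
  have hsum1 : ∑ f : Fin i ↪ P, ∏ t, (1 - val (f t))
      ≤ (d : ℝ) * ((∑ p, (1 - val p)) / N) ^ i :=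
    Stmt10Aux.Tsum_le i (fun p => 1 - val p) (fun p => by show (0:ℝ) ≤ 1 - val p; linarith [hval1 p]) hNpos
  have hVleN : V ≤ N := by
    rw [hV]
    calc ∑ p, val p ≤ ∑ _p : P, (1 : ℝ) := Finset.sum_le_sum fun p _ => hval1 p
    _ = N := by rw [Finset.sum_const, Finset.card_univ, nsmul_eq_mul, mul_one]
  have hmono : ((∑ p, (1 - val p)) / N) ^ i ≤ Real.exp (-(i : ℝ) * V / N) := by
    have hsv : ∑ p, (1 - val p) = N - V := by
      rw [Finset.sum_sub_distrib, Finset.sum_const, Finset.card_univ, nsmul_eq_mul, mul_one, hV]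
    rw [hsv]
    have hm0 : 0 ≤ (N - V) / N := div_nonneg (by linarith) hNR.le
    have hle : ((N : ℝ) - V) / N ≤ Real.exp (-(V / N)) := by
      have h1 : ((N : ℝ) - V) / N = -(V / N) + 1 := by field_simp; ring
      rw [h1]
      exact Real.add_one_le_exp _
    calc (((N : ℝ) - V) / N) ^ i ≤ (Real.exp (-(V / N))) ^ i := pow_le_pow_left₀ hm0 hle i
    _ = Real.exp ((i : ℝ) * (-(V / N))) := (Real.exp_nat_mul _ i).symm
    _ = Real.exp (-(i : ℝ) * V / N) := by ring_nf
  calc μ K ≤ μ (⋃ f : Fin i ↪ P, ({ω | ∀ t, sel t ω = f t} ∩ K)) := measure_mono hcover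
  _ ≤ ∑' f : Fin i ↪ P, μ ({ω | ∀ t, sel t ω = f t} ∩ K) := measure_iUnion_le _
  _ = ∑ f : Fin i ↪ P, μ ({ω | ∀ t, sel t ω = f t} ∩ K) := tsum_fintype _
  _ ≤ ∑ f : Fin i ↪ P, (1 / (d : ENNReal)) * ENNReal.ofReal (∏ t, (1 - val (f t))) := by
      apply Finset.sum_le_sum
      intro f _
      have h := hsep f f.injective
      rw [hunif f f.injective] at h
      exact h
  _ = (1 / (d : ENNReal)) * ∑ f : Fin i ↪ P, ENNReal.ofReal (∏ t, (1 - val (f t))) := by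
      rw [Finset.mul_sum]
  _ = (1 / (d : ENNReal)) * ENNReal.ofReal (∑ f : Fin i ↪ P, ∏ t, (1 - val (f t))) := by
      rw [ENNReal.ofReal_sum_of_nonneg]
      intro f _
      exact Finset.prod_nonneg fun t _ => by have := hval1 (f t); linarith
  _ ≤ (1 / (d : ENNReal)) * ENNReal.ofReal ((d : ℝ) * ((∑ p, (1 - val p)) / N) ^ i) := by
      gcongr
  _ = ENNReal.ofReal (((∑ p, (1 - val p)) / N) ^ i) := by
      rw [ENNReal.ofReal_mul (by positivity), ENNReal.ofReal_natCast, ← mul_assoc, one_div,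
        ENNReal.inv_mul_cancel (by exact_mod_cast hd0) (ENNReal.natCast_ne_top d), one_mul]
  _ ≤ ENNReal.ofReal (Real.exp (-(i : ℝ) * V / N)) := ENNReal.ofReal_le_ofReal hmono
end

section
/- Let L ≥ 1 and λ ≥ 1 with L/λ ≥ 2. Let π = (v₀, …, v_k) be a sequence with k ≥ L/λ, let prefix(π) be its first ⌈(k+1)/4⌉ vertices and suffix(π) its last ⌈(k+1)/4⌉ vertices, and let D : {v₀,…,v_k} → ℝ satisfy D(v_{i+1}) ≥ D(v_i) + 1/L for all i. Then for any u ∈ prefix(π) and v ∈ suffix(π), D(v) − D(u) ≥ (k+1)/(2L) − 2/L ≥ 1/(4λ) (for L/λ ≥ 8). -/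
/-- Prefix–suffix distance gap: along a path of `k+1 ≥ L/λ` vertices whose level values `D`
increase by at least `1/L` each step, any prefix vertex and suffix vertex satisfy
`D j - D i ≥ (k+1)/(2L) - 2/L ≥ 1/(4λ)` (for `L/λ ≥ 8`). -/
theorem stmt19 (L lam : ℝ) (hL : 1 ≤ L) (hlam : 1 ≤ lam) (hratio : 8 ≤ L / lam)
    (k : ℕ) (hk : L / lam ≤ (k : ℝ))
    (D : ℕ → ℝ) (hD : ∀ i, i < k → D i + 1 / L ≤ D (i + 1))
    (i j : ℕ) (hi : i < (k + 4) / 4) (hj1 : k + 1 - (k + 4) / 4 ≤ j) (hj2 : j ≤ k) :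
    ((k : ℝ) + 1) / (2 * L) - 2 / L ≤ D j - D i ∧
      1 / (4 * lam) ≤ ((k : ℝ) + 1) / (2 * L) - 2 / L := by
  have hL0 : (0:ℝ) < L := lt_of_lt_of_le one_pos hL
  have hlam0 : (0:ℝ) < lam := lt_of_lt_of_le one_pos hlam
  have hk8 : 8 ≤ k := by
    have h8 : (8:ℝ) ≤ (k:ℝ) := le_trans hratio hk
    exact_mod_cast h8
  have hij : i ≤ j := by omega
  have hm : k ≤ 2 * (j - i) := by omega
  -- chain inequality
  have chain : ∀ m a, a + m ≤ k → D a + (m : ℝ) / L ≤ D (a + m) := by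
    intro m
    induction m with
    | zero => intro a _; simp
    | succ n ih =>
      intro a ha
      have h1 := ih a (by omega)
      have h2 := hD (a + n) (by omega)
      have : ((n:ℝ) + 1) / L = (n:ℝ)/L + 1/L := by ring
      push_cast
      rw [this]
      calc D a + ((n:ℝ)/L + 1/L) = (D a + (n:ℝ)/L) + 1/L := by ring
        _ ≤ D (a + n) + 1/L := by linarith
        _ ≤ D (a + n + 1) := h2
  have key : D i + ((j - i : ℕ) : ℝ) / L ≤ D j := by
    have := chain (j - i) i (by omega)
    rwa [Nat.add_sub_cancel' hij] at this
  have hmr : ((k:ℝ) + 1) / 2 - 2 ≤ ((j - i : ℕ) : ℝ) := by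
    have : (k:ℝ) ≤ 2 * ((j - i : ℕ) : ℝ) := by exact_mod_cast hm
    linarith
  have e2 : ((k:ℝ) + 1) / (2 * L) - 2 / L = (((k:ℝ) + 1) / 2 - 2) / L := by
    field_simp
  constructor
  · rw [e2]
    have h1 : (((k:ℝ) + 1) / 2 - 2) / L ≤ ((j - i : ℕ) : ℝ) / L := by gcongr
    linarith
  · have h : L / (4 * lam) ≤ ((k:ℝ) + 1) / 2 - 2 := by
      have e3 : L / (4 * lam) = (L / lam) / 4 := by rw [div_div, mul_comm]
      rw [e3]; linarith
    have e1 : 1 / (4 * lam) = (L / (4 * lam)) / L := by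
      rw [eq_div_iff (ne_of_gt hL0)]; field_simp
    rw [e1, e2]
    gcongr
end
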